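/- Let w be a real-valued function on the punctured unit disk Δ* = {z ∈ ℂ : 0 < |z| < 1} that is C² and subharmonic (Δw ≥ 0) on Δ*, extends continuously to {z : 0 < |z| ≤ 1}, and has finite Dirichlet energy ∫_{Δ*} |∇w|² < ∞. Then w satisfies the maximum principle with respect to the exterior boundary circle alone: for every z ∈ Δ*, w(z) ≤ max_{|ζ| = 1} w(ζ). -/

import Mathlib

open MeasureTheory

/-- Partial derivative in the real direction of `w : ℂ → ℝ`. -/
noncomputable def pdX (w : ℂ → ℝ) (z : ℂ) : ℝ := fderiv ℝ w z 1

/-- Partial derivative in the imaginary direction of `w : ℂ → ℝ`. -/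
noncomputable def pdY (w : ℂ → ℝ) (z : ℂ) : ℝ := fderiv ℝ w z Complex.I

/-- The Euclidean Laplacian of `w : ℂ → ℝ`. -/
noncomputable def lap (w : ℂ → ℝ) (z : ℂ) : ℝ :=
  fderiv ℝ (fun ζ => fderiv ℝ w ζ 1) z 1
    + fderiv ℝ (fun ζ => fderiv ℝ w ζ Complex.I) z Complex.I

open MeasureTheory Set Filter Topology
open scoped Real

lemma second_deriv_nonpos {g g' : ℝ → ℝ} {a : ℝ}
    (hmax : IsLocalMax g 0)
    (hg : ∀ᶠ t in 𝓝 (0:ℝ), HasDerivAt g (g' t) t)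
    (hg' : HasDerivAt g' a 0) : a ≤ 0 := by
  by_contra hca
  push_neg at hca
  have h0 : g' 0 = 0 := by
    have hd : HasDerivAt g (g' 0) 0 := hg.self_of_nhds
    have h := hmax.deriv_eq_zero
    rwa [hd.deriv] at h
  have hs := hasDerivAt_iff_tendsto_slope.1 hg'
  have hpos : ∀ᶠ t in 𝓝[>] (0:ℝ), 0 < g' t := by
    have h1 : ∀ᶠ t in 𝓝[≠] (0:ℝ), 0 < slope g' 0 t :=
      hs (Ioi_mem_nhds hca)
    have h2 : 𝓝[>] (0:ℝ) ≤ 𝓝[≠] (0:ℝ) :=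
      nhdsWithin_mono 0 (fun t ht => ne_of_gt ht)
    filter_upwards [h2 h1, self_mem_nhdsWithin] with t ht ht'
    have h3 : 0 < t⁻¹ * (g' t - g' 0) := by
      simpa [slope] using ht
    rw [h0, sub_zero] at h3
    by_contra hcon
    push_neg at hcon
    have h4 : t⁻¹ * g' t ≤ 0 :=
      mul_nonpos_iff.mpr (Or.inl ⟨(inv_pos.mpr ht').le, hcon⟩)
    linarith
  obtain ⟨c, hc0, hc⟩ := (nhdsGT_basis (0:ℝ)).eventually_iff.mp hpos
  have hand : ∀ᶠ t in 𝓝 (0:ℝ), HasDerivAt g (g' t) t ∧ g t ≤ g 0 :=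
    hg.and (show ∀ᶠ x in 𝓝 (0:ℝ), g x ≤ g 0 from hmax)
  obtain ⟨d, hd0, hd⟩ := Metric.eventually_nhds_iff_ball.mp hand
  set b := min c d / 2 with hb
  have hbpos : 0 < b := by positivity
  have hbc : b < c := by
    have : min c d ≤ c := min_le_left _ _
    have h2 : b < min c d := by
      rw [hb]; linarith [lt_min hc0 hd0]
    linarith
  have hbd : b < d := by
    have : min c d ≤ d := min_le_right _ _
    have h2 : b < min c d := by
      rw [hb]; linarith [lt_min hc0 hd0]
    linarith
  have hmono : StrictMonoOn g (Icc 0 b) := by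
    apply strictMonoOn_of_deriv_pos (convex_Icc 0 b)
    · intro t ht
      have htd : dist t 0 < d := by
        rw [Real.dist_eq, sub_zero, abs_of_nonneg ht.1]
        exact lt_of_le_of_lt ht.2 hbd
      exact ((hd t (by simpa [Metric.mem_ball] using htd)).1).continuousAt.continuousWithinAt
    · intro t ht
      rw [interior_Icc] at ht
      have htd : dist t 0 < d := by
        rw [Real.dist_eq, sub_zero, abs_of_nonneg ht.1.le]
        exact lt_trans ht.2 hbd
      rw [((hd t (by simpa [Metric.mem_ball] using htd)).1).deriv]
      exact hc ⟨ht.1, lt_trans ht.2 hbc⟩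
  have h1 : g 0 < g b := hmono (left_mem_Icc.mpr hbpos.le) (right_mem_Icc.mpr hbpos.le) hbpos
  have h2 : g b ≤ g 0 := by
    have hbdist : dist b 0 < d := by
      rw [Real.dist_eq, sub_zero, abs_of_nonneg hbpos.le]; exact hbd
    exact (hd b (by simpa [Metric.mem_ball] using hbdist)).2
  linarith

lemma second_directional_nonpos {v : ℂ → ℝ} {U : Set ℂ} (hU : IsOpen U) {p : ℂ}
    (hp : p ∈ U) (hv : ContDiffOn ℝ 2 v U) (hmax : IsLocalMax v p) (e : ℂ) :
    fderiv ℝ (fun z => fderiv ℝ v z e) p e ≤ 0 := by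
  have hfd : ContDiffOn ℝ 1 (fderiv ℝ v) U := by
    apply hv.fderiv_of_isOpen hU
    norm_num
  have happ : DifferentiableAt ℝ (fun z => fderiv ℝ v z e) p := by
    have h1 : DifferentiableAt ℝ (fderiv ℝ v) p :=
      ((hfd.differentiableOn (by norm_num)) p hp).differentiableAt (hU.mem_nhds hp)
    exact h1.clm_apply (differentiableAt_const e)
  have hline : ∀ t : ℝ, HasDerivAt (fun s : ℝ => p + s • e) e t := fun t => by
    simpa using ((hasDerivAt_id t).smul_const e).const_add p
  have htend : Tendsto (fun t : ℝ => p + t • e) (𝓝 0) (𝓝 p) := by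
    have := ((hline 0).continuousAt : ContinuousAt (fun s : ℝ => p + s • e) 0)
    simpa using this.tendsto
  have hmem : ∀ᶠ t : ℝ in 𝓝 0, p + t • e ∈ U := htend.eventually (hU.eventually_mem hp)
  have hg : ∀ᶠ t in 𝓝 (0:ℝ), HasDerivAt (fun s => v (p + s • e))
      (fderiv ℝ v (p + t • e) e) t := by
    filter_upwards [hmem] with t ht
    have hdiff : DifferentiableAt ℝ v (p + t • e) :=
      ((hv.differentiableOn (by norm_num)) _ ht).differentiableAt (hU.mem_nhds ht)
    exact hdiff.hasFDerivAt.comp_hasDerivAt t (hline t)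
  have happ' : HasFDerivAt (fun z => fderiv ℝ v z e)
      (fderiv ℝ (fun z => fderiv ℝ v z e) p) (p + (0:ℝ) • e) := by
    simpa using happ.hasFDerivAt
  have hg' : HasDerivAt (fun t : ℝ => fderiv ℝ v (p + t • e) e)
      (fderiv ℝ (fun z => fderiv ℝ v z e) p e) 0 := by
    have := happ'.comp_hasDerivAt 0 (hline 0)
    simpa [Function.comp_def] using this
  have hmax' : IsLocalMax (fun s : ℝ => v (p + s • e)) 0 := by
    unfold IsLocalMax IsMaxFilter
    refine (htend.eventually (show ∀ᶠ ζ in 𝓝 p, v ζ ≤ v p from hmax)).mono ?_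
    intro t ht
    simpa using ht
  exact second_deriv_nonpos hmax' hg hg'

lemma interior_not_max {v : ℂ → ℝ} {U : Set ℂ} (hU : IsOpen U) {p : ℂ}
    (hp : p ∈ U) (hv : ContDiffOn ℝ 2 v U) (hmax : IsLocalMax v p) :
    lap v p ≤ 0 := by
  have h1 := second_directional_nonpos hU hp hv hmax 1
  have h2 := second_directional_nonpos hU hp hv hmax Complex.I
  unfold lap
  linarith

lemma maxPrinciple {v : ℂ → ℝ} {a : ℝ} (ha : 0 < a) (ha1 : a < 1)
    (hcont : ContinuousOn v {z : ℂ | a ≤ ‖z‖ ∧ ‖z‖ ≤ 1})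
    (hC2 : ContDiffOn ℝ 2 v {z : ℂ | a < ‖z‖ ∧ ‖z‖ < 1})
    (hlap : ∀ z : ℂ, a < ‖z‖ → ‖z‖ < 1 → 0 < lap v z)
    {M : ℝ} (hb : ∀ z : ℂ, (‖z‖ = a ∨ ‖z‖ = 1) → v z ≤ M)
    (z : ℂ) (h1 : a ≤ ‖z‖) (h2 : ‖z‖ ≤ 1) : v z ≤ M := by
  set K : Set ℂ := {z : ℂ | a ≤ ‖z‖ ∧ ‖z‖ ≤ 1} with hK
  have hKclosed : IsClosed K := by
    have : K = (fun z : ℂ => ‖z‖) ⁻¹' (Icc a 1) := rfl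
    rw [this]
    exact (isClosed_Icc).preimage continuous_norm
  have hKcompact : IsCompact K := by
    apply Metric.isCompact_of_isClosed_isBounded hKclosed
    apply Bornology.IsBounded.subset (Metric.isBounded_closedBall (x := (0:ℂ)) (r := 1))
    intro w hw
    simpa [Metric.mem_closedBall, Complex.dist_eq] using hw.2
  have hzK : z ∈ K := ⟨h1, h2⟩
  obtain ⟨x, hxK, hxmax⟩ := hKcompact.exists_isMaxOn ⟨z, hzK⟩ hcont
  rcases eq_or_lt_of_le hxK.1 with hxa | hxa
  · exact le_trans (hxmax hzK) (hb x (Or.inl hxa.symm))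
  rcases eq_or_lt_of_le hxK.2 with hx1 | hx1
  · exact le_trans (hxmax hzK) (hb x (Or.inr hx1))
  exfalso
  have hUopen : IsOpen {z : ℂ | a < ‖z‖ ∧ ‖z‖ < 1} := by
    have : {z : ℂ | a < ‖z‖ ∧ ‖z‖ < 1} = (fun z : ℂ => ‖z‖) ⁻¹' (Ioo a 1) := rfl
    rw [this]
    exact isOpen_Ioo.preimage continuous_norm
  have hxU : x ∈ {z : ℂ | a < ‖z‖ ∧ ‖z‖ < 1} := ⟨hxa, hx1⟩
  have hloc : IsLocalMax v x := by
    apply hxmax.isLocalMax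
    exact Filter.mem_of_superset (hUopen.mem_nhds hxU) (fun w hw => ⟨hw.1.le, hw.2.le⟩)
  exact absurd (interior_not_max hUopen hxU hC2 hloc) (not_le.mpr (hlap x hxa hx1))

noncomputable def nsq (z : ℂ) : ℝ := z.re ^ 2 + z.im ^ 2
noncomputable def lpsi (z : ℂ) : ℝ := Real.log (nsq z)
noncomputable def LnD (z : ℂ) : ℂ →L[ℝ] ℝ :=
  (2 * z.re) • Complex.reCLM + (2 * z.im) • Complex.imCLM

lemma contDiff_nsq : ContDiff ℝ 2 nsq :=
  ((Complex.reCLM.contDiff.of_le le_top).pow 2).add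
    ((Complex.imCLM.contDiff.of_le le_top).pow 2)

lemma nsq_pos {z : ℂ} (hz : z ≠ 0) : 0 < nsq z := by
  have h := Complex.normSq_pos.mpr hz
  rw [Complex.normSq_apply] at h
  unfold nsq; nlinarith

lemma nsq_eq_abs_sq (z : ℂ) : nsq z = ‖z‖ ^ 2 := by
  rw [Complex.sq_norm, Complex.normSq_apply]; unfold nsq; ring

lemma hasFDerivAt_nsq (z : ℂ) : HasFDerivAt nsq (LnD z) z := by
  have h1 : HasFDerivAt (fun ζ : ℂ => ζ.re ^ 2) ((2 * z.re) • Complex.reCLM) z := by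
    have := (hasDerivAt_pow 2 z.re).comp_hasFDerivAt z Complex.reCLM.hasFDerivAt
    simpa [Function.comp_def] using this
  have h2 : HasFDerivAt (fun ζ : ℂ => ζ.im ^ 2) ((2 * z.im) • Complex.imCLM) z := by
    have := (hasDerivAt_pow 2 z.im).comp_hasFDerivAt z Complex.imCLM.hasFDerivAt
    simpa [Function.comp_def] using this
  exact h1.add h2

lemma contDiffAt_lpsi {z : ℂ} (hz : z ≠ 0) : ContDiffAt ℝ 2 lpsi z := by
  have h1 : ContDiffAt ℝ 2 Real.log (nsq z) :=
    (Real.contDiffAt_log.mpr (nsq_pos hz).ne').of_le le_top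
  exact h1.comp z contDiff_nsq.contDiffAt

lemma hasFDerivAt_lpsi {z : ℂ} (hz : z ≠ 0) :
    HasFDerivAt lpsi ((nsq z)⁻¹ • LnD z) z := by
  have h := (Real.hasDerivAt_log (nsq_pos hz).ne').comp_hasFDerivAt z (hasFDerivAt_nsq z)
  exact h

lemma fderiv_nsq_one (z : ℂ) : fderiv ℝ nsq z 1 = 2 * z.re := by
  rw [(hasFDerivAt_nsq z).fderiv]; simp [LnD]

lemma fderiv_nsq_I (z : ℂ) : fderiv ℝ nsq z Complex.I = 2 * z.im := by
  rw [(hasFDerivAt_nsq z).fderiv]; simp [LnD]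

lemma lap_nsq (z : ℂ) : lap nsq z = 4 := by
  have e1 : (fun ζ : ℂ => fderiv ℝ nsq ζ 1) = fun ζ : ℂ => 2 * ζ.re := by
    funext ζ; exact fderiv_nsq_one ζ
  have e2 : (fun ζ : ℂ => fderiv ℝ nsq ζ Complex.I) = fun ζ : ℂ => 2 * ζ.im := by
    funext ζ; exact fderiv_nsq_I ζ
  have h1 : HasFDerivAt (fun ζ : ℂ => 2 * ζ.re) ((2:ℝ) • Complex.reCLM) z := by
    simpa using Complex.reCLM.hasFDerivAt.const_mul (2:ℝ)
  have h2 : HasFDerivAt (fun ζ : ℂ => 2 * ζ.im) ((2:ℝ) • Complex.imCLM) z := by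
    simpa using Complex.imCLM.hasFDerivAt.const_mul (2:ℝ)
  unfold lap
  rw [e1, e2, h1.fderiv, h2.fderiv]
  simp
  norm_num

lemma lap_lpsi {z : ℂ} (hz : z ≠ 0) : lap lpsi z = 0 := by
  have hopen : IsOpen {ζ : ℂ | ζ ≠ 0} := isOpen_compl_singleton
  have hmem : {ζ : ℂ | ζ ≠ 0} ∈ 𝓝 z := hopen.mem_nhds hz
  have e1 : (fun ζ : ℂ => fderiv ℝ lpsi ζ 1) =ᶠ[𝓝 z] fun ζ : ℂ => 2 * ζ.re * (nsq ζ)⁻¹ := by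
    filter_upwards [hmem] with ζ hζ
    rw [(hasFDerivAt_lpsi hζ).fderiv]
    simp [LnD]
    field_simp
  have e2 : (fun ζ : ℂ => fderiv ℝ lpsi ζ Complex.I) =ᶠ[𝓝 z]
      fun ζ : ℂ => 2 * ζ.im * (nsq ζ)⁻¹ := by
    filter_upwards [hmem] with ζ hζ
    rw [(hasFDerivAt_lpsi hζ).fderiv]
    simp [LnD]
    field_simp
  have hinv : HasFDerivAt (fun ζ : ℂ => (nsq ζ)⁻¹) ((-(nsq z ^ 2)⁻¹) • LnD z) z := by
    have h := (hasDerivAt_inv (nsq_pos hz).ne').comp_hasFDerivAt z (hasFDerivAt_nsq z)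
    exact h
  have hnum1 : HasFDerivAt (fun ζ : ℂ => 2 * ζ.re) ((2:ℝ) • Complex.reCLM) z := by
    simpa using Complex.reCLM.hasFDerivAt.const_mul (2:ℝ)
  have hnum2 : HasFDerivAt (fun ζ : ℂ => 2 * ζ.im) ((2:ℝ) • Complex.imCLM) z := by
    simpa using Complex.imCLM.hasFDerivAt.const_mul (2:ℝ)
  have hq1 : HasFDerivAt (fun ζ : ℂ => 2 * ζ.re * (nsq ζ)⁻¹) _ z := hnum1.mul hinv
  have hq2 : HasFDerivAt (fun ζ : ℂ => 2 * ζ.im * (nsq ζ)⁻¹) _ z := hnum2.mul hinv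
  unfold lap
  rw [e1.fderiv_eq, e2.fderiv_eq, hq1.fderiv, hq2.fderiv]
  have hn := nsq_pos hz
  have hnsq : nsq z = z.re ^ 2 + z.im ^ 2 := rfl
  simp only [ContinuousLinearMap.add_apply, ContinuousLinearMap.smul_apply,
    ContinuousLinearMap.coe_smul', Pi.smul_apply, LnD, Complex.reCLM_apply,
    Complex.imCLM_apply, Complex.one_re, Complex.one_im, Complex.I_re, Complex.I_im,
    smul_eq_mul]
  rw [hnsq] at hn ⊢
  field_simp
  ring

lemma diffAt_fderiv_apply {f : ℂ → ℝ} {U : Set ℂ} (hU : IsOpen U) {z : ℂ}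
    (hz : z ∈ U) (hf : ContDiffOn ℝ 2 f U) (e : ℂ) :
    DifferentiableAt ℝ (fun ζ => fderiv ℝ f ζ e) z := by
  have hfd : ContDiffOn ℝ 1 (fderiv ℝ f) U := by
    apply hf.fderiv_of_isOpen hU; norm_num
  have h1 : DifferentiableAt ℝ (fderiv ℝ f) z :=
    ((hfd.differentiableOn (by norm_num)) z hz).differentiableAt (hU.mem_nhds hz)
  exact h1.clm_apply (differentiableAt_const e)

lemma diffAt_of_C2 {f : ℂ → ℝ} {U : Set ℂ} (hU : IsOpen U) {z : ℂ}
    (hz : z ∈ U) (hf : ContDiffOn ℝ 2 f U) : DifferentiableAt ℝ f z :=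
  ((hf.differentiableOn (by norm_num)) z hz).differentiableAt (hU.mem_nhds hz)

lemma lap_add {f g : ℂ → ℝ} {U : Set ℂ} (hU : IsOpen U) {z : ℂ} (hz : z ∈ U)
    (hf : ContDiffOn ℝ 2 f U) (hg : ContDiffOn ℝ 2 g U) :
    lap (fun ζ => f ζ + g ζ) z = lap f z + lap g z := by
  have key : ∀ e : ℂ, fderiv ℝ (fun ζ => fderiv ℝ (fun ζ' => f ζ' + g ζ') ζ e) z e
      = fderiv ℝ (fun ζ => fderiv ℝ f ζ e) z e + fderiv ℝ (fun ζ => fderiv ℝ g ζ e) z e := by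
    intro e
    have heq : (fun ζ => fderiv ℝ (fun ζ' => f ζ' + g ζ') ζ e) =ᶠ[𝓝 z]
        (fun ζ => fderiv ℝ f ζ e + fderiv ℝ g ζ e) := by
      filter_upwards [hU.eventually_mem hz] with ζ hζ
      rw [fderiv_fun_add (diffAt_of_C2 hU hζ hf) (diffAt_of_C2 hU hζ hg)]
      simp
    rw [heq.fderiv_eq,
      fderiv_fun_add (diffAt_fderiv_apply hU hz hf e) (diffAt_fderiv_apply hU hz hg e)]
    simp
  unfold lap
  rw [key 1, key Complex.I]
  ring

lemma lap_const_mul {f : ℂ → ℝ} {U : Set ℂ} (hU : IsOpen U) {z : ℂ} (hz : z ∈ U)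
    (hf : ContDiffOn ℝ 2 f U) (c : ℝ) :
    lap (fun ζ => c * f ζ) z = c * lap f z := by
  have key : ∀ e : ℂ, fderiv ℝ (fun ζ => fderiv ℝ (fun ζ' => c * f ζ') ζ e) z e
      = c * fderiv ℝ (fun ζ => fderiv ℝ f ζ e) z e := by
    intro e
    have heq : (fun ζ => fderiv ℝ (fun ζ' => c * f ζ') ζ e) =ᶠ[𝓝 z]
        (fun ζ => c * fderiv ℝ f ζ e) := by
      filter_upwards [hU.eventually_mem hz] with ζ hζ
      rw [fderiv_const_mul (diffAt_of_C2 hU hζ hf) c]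
      simp
    rw [heq.fderiv_eq, fderiv_const_mul (diffAt_fderiv_apply hU hz hf e) c]
    simp
  unfold lap
  rw [key 1, key Complex.I]
  ring

lemma contDiffOn_lpsi {U : Set ℂ} (hU0 : ∀ ζ ∈ U, ζ ≠ (0:ℂ)) :
    ContDiffOn ℝ 2 lpsi U :=
  fun ζ hζ => (contDiffAt_lpsi (hU0 ζ hζ)).contDiffWithinAt

lemma lap_pert {w : ℂ → ℝ} {U : Set ℂ} (hU : IsOpen U) (hU0 : ∀ ζ ∈ U, ζ ≠ (0:ℂ))
    {z : ℂ} (hz : z ∈ U) (hw : ContDiffOn ℝ 2 w U) (ε δ : ℝ) :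
    lap (fun ζ => w ζ + (ε * lpsi ζ + δ * nsq ζ)) z = lap w z + 4 * δ := by
  have hlp : ContDiffOn ℝ 2 lpsi U := contDiffOn_lpsi hU0
  have hns : ContDiffOn ℝ 2 nsq U := contDiff_nsq.contDiffOn
  have hεlp : ContDiffOn ℝ 2 (fun ζ => ε * lpsi ζ) U := hlp.const_smul ε
  have hδns : ContDiffOn ℝ 2 (fun ζ => δ * nsq ζ) U := hns.const_smul δ
  rw [lap_add hU hz hw (hεlp.add hδns), lap_add hU hz hεlp hδns,
    lap_const_mul hU hz hlp ε, lap_const_mul hU hz hns δ,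
    lap_lpsi (hU0 z hz), lap_nsq]
  ring

noncomputable def Fen (w : ℂ → ℝ) (z : ℂ) : ℝ := pdX w z ^ 2 + pdY w z ^ 2

lemma Fen_nonneg (w : ℂ → ℝ) (z : ℂ) : 0 ≤ Fen w z := by
  unfold Fen; positivity

def PD : Set ℂ := {z : ℂ | 0 < ‖z‖ ∧ ‖z‖ < 1}

lemma isOpen_PD : IsOpen PD := by
  have : PD = (fun z : ℂ => ‖z‖) ⁻¹' (Set.Ioo 0 1) := rfl
  rw [this]
  exact isOpen_Ioo.preimage continuous_norm

lemma circleMap_mem_PD {r : ℝ} (h0 : 0 < r) (h1 : r < 1) (θ : ℝ) :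
    circleMap 0 r θ ∈ PD := by
  constructor <;> rw [norm_circleMap_zero, abs_of_pos h0] <;> assumption

lemma fderiv_apply_sq_le (w : ℂ → ℝ) (z e : ℂ) :
    (fderiv ℝ w z e) ^ 2 ≤ ‖e‖ ^ 2 * Fen w z := by
  have hdecomp : fderiv ℝ w z e = e.re * pdX w z + e.im * pdY w z := by
    have he : e = e.re • (1:ℂ) + e.im • Complex.I := by
      simp [Complex.real_smul]
    conv_lhs => rw [he]
    rw [map_add, (fderiv ℝ w z).map_smul, (fderiv ℝ w z).map_smul]
    simp [pdX, pdY]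
  have habs : ‖e‖ ^ 2 = e.re ^ 2 + e.im ^ 2 := by
    rw [Complex.sq_norm, Complex.normSq_apply]; ring
  rw [hdecomp, habs]
  unfold Fen
  nlinarith [sq_nonneg (e.re * pdY w z - e.im * pdX w z)]

lemma amgm {x c ρ lam : ℝ} (hx : x ^ 2 ≤ c) (hρ : 0 < ρ) (hlam : 0 < lam) :
    |x| ≤ lam / 2 * (ρ * c) + 1 / (2 * lam * ρ) := by
  have hlρ : 0 < lam * ρ := mul_pos hlam hρ
  have key : 2 * (lam * ρ) * |x| ≤ (lam * ρ) ^ 2 * c + 1 := by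
    nlinarith [sq_nonneg (lam * ρ * |x| - 1), sq_abs x]
  have hT : 2 * (lam * ρ) * (lam / 2 * (ρ * c) + 1 / (2 * lam * ρ)) =
      (lam * ρ) ^ 2 * c + 1 := by
    field_simp
  have key2 : 2 * (lam * ρ) * |x| ≤ 2 * (lam * ρ) * (lam / 2 * (ρ * c) + 1 / (2 * lam * ρ)) := by
    rw [hT]; exact key
  exact le_of_mul_le_mul_left key2 (by linarith)

lemma ftc_abs {g g' : ℝ → ℝ} {a b : ℝ} (hab : a ≤ b)
    (hg : ∀ t ∈ Set.uIcc a b, HasDerivAt g (g' t) t)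
    (hcont : ContinuousOn g' (Set.uIcc a b)) :
    |g b - g a| ≤ ∫ t in a..b, |g' t| := by
  have hInt : IntervalIntegrable g' volume a b := hcont.intervalIntegrable
  rw [← intervalIntegral.integral_eq_sub_of_hasDerivAt hg hInt]
  exact intervalIntegral.abs_integral_le_integral_abs hab

section Wlemmas

variable {w : ℂ → ℝ} (hC2 : ContDiffOn ℝ 2 w PD)
include hC2

lemma hasDerivAt_circle_comp {r : ℝ} (h0 : 0 < r) (h1 : r < 1) (θ : ℝ) :
    HasDerivAt (fun θ => w (circleMap 0 r θ))
      (fderiv ℝ w (circleMap 0 r θ) (circleMap 0 r θ * Complex.I)) θ :=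
  (diffAt_of_C2 isOpen_PD (circleMap_mem_PD h0 h1 θ) hC2).hasFDerivAt.comp_hasDerivAt θ
    (hasDerivAt_circleMap 0 r θ)

lemma hasDerivAt_ray_comp {ρ : ℝ} (h0 : 0 < ρ) (h1 : ρ < 1) (θ : ℝ) :
    HasDerivAt (fun ρ => w (circleMap 0 ρ θ))
      (fderiv ℝ w (circleMap 0 ρ θ) (circleMap 0 1 θ)) ρ := by
  have heq : (fun ρ : ℝ => circleMap 0 ρ θ) = fun ρ : ℝ => ρ • circleMap 0 1 θ := by
    funext ρ; simp [circleMap, Complex.real_smul]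
  have hline : HasDerivAt (fun ρ : ℝ => circleMap 0 ρ θ) (circleMap 0 1 θ) ρ := by
    rw [heq]; simpa using (hasDerivAt_id ρ).smul_const (circleMap 0 1 θ)
  exact (diffAt_of_C2 isOpen_PD (circleMap_mem_PD h0 h1 θ) hC2).hasFDerivAt.comp_hasDerivAt
    ρ hline

lemma cont_fderiv_on_PD : ContinuousOn (fderiv ℝ w) PD :=
  hC2.continuousOn_fderiv_of_isOpen isOpen_PD (by norm_num)

lemma cont_circle_deriv {r : ℝ} (h0 : 0 < r) (h1 : r < 1) :
    Continuous (fun θ => fderiv ℝ w (circleMap 0 r θ) (circleMap 0 r θ * Complex.I)) := by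
  have h1' : Continuous fun θ => fderiv ℝ w (circleMap 0 r θ) :=
    (cont_fderiv_on_PD hC2).comp_continuous (continuous_circleMap 0 r)
      (fun θ => circleMap_mem_PD h0 h1 θ)
  exact h1'.clm_apply ((continuous_circleMap 0 r).mul continuous_const)

lemma cont_ray_deriv {a b : ℝ} (h0 : 0 < a) (hb : b < 1) (hab : a ≤ b) (θ : ℝ) :
    ContinuousOn (fun ρ => fderiv ℝ w (circleMap 0 ρ θ) (circleMap 0 1 θ))
      (Set.uIcc a b) := by
  have hmap : Continuous (fun ρ : ℝ => circleMap 0 ρ θ) := by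
    have heq : (fun ρ : ℝ => circleMap 0 ρ θ) = fun ρ : ℝ => ρ • circleMap 0 1 θ := by
      funext ρ; simp [circleMap, Complex.real_smul]
    rw [heq]
    exact continuous_id.smul continuous_const
  have hmapsTo : Set.MapsTo (fun ρ : ℝ => circleMap 0 ρ θ) (Set.uIcc a b) PD := by
    intro ρ hρ
    rw [Set.uIcc_of_le hab] at hρ
    constructor <;> rw [norm_circleMap_zero, abs_of_pos (lt_of_lt_of_le h0 hρ.1)]
    · exact lt_of_lt_of_le h0 hρ.1
    · exact lt_of_le_of_lt hρ.2 hb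
  have h1' : ContinuousOn (fun ρ : ℝ => fderiv ℝ w (circleMap 0 ρ θ)) (Set.uIcc a b) :=
    (cont_fderiv_on_PD hC2).comp hmap.continuousOn hmapsTo
  exact h1'.clm_apply continuousOn_const

end Wlemmas

lemma measurable_Fen (w : ℂ → ℝ) : Measurable (Fen w) := by
  have h1 : Measurable (pdX w) := measurable_fderiv_apply_const ℝ w 1
  have h2 : Measurable (pdY w) := measurable_fderiv_apply_const ℝ w Complex.I
  exact (h1.pow_const 2).add (h2.pow_const 2)

lemma polar_point_eq (p : ℝ × ℝ) :
    (polarCoord.symm p).1 + (polarCoord.symm p).2 * Complex.I = circleMap 0 p.1 p.2 := by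
  rw [polarCoord_symm_apply]
  simp only [circleMap, Complex.ofReal_mul, zero_add]
  rw [Complex.exp_mul_I]
  push_cast
  ring

open ENNReal in
lemma polar_lint_le {w : ℂ → ℝ}
    (henergy : IntegrableOn (Fen w) PD) {a b : ℝ} (h0 : 0 < a) (hab : a < b) (hb1 : b ≤ 1) :
    ∫⁻ p in Set.Ioo a b ×ˢ Set.Ioo (-π) π,
      ENNReal.ofReal (p.1 * Fen w (circleMap 0 p.1 p.2))
      ≤ ENNReal.ofReal (∫ z in PD, Fen w z) := by
  set F := Fen w
  set s : Set (ℝ × ℝ) := Set.Ioo a b ×ˢ Set.Ioo (-π) π with hs_def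
  have hs : MeasurableSet s := (measurableSet_Ioo.prod measurableSet_Ioo)
  set B : ℝ × ℝ → ℝ × ℝ →L[ℝ] ℝ × ℝ := fun p =>
    LinearMap.toContinuousLinearMap (Matrix.toLin (Module.Basis.finTwoProd ℝ) (Module.Basis.finTwoProd ℝ)
      !![Real.cos p.2, -p.1 * Real.sin p.2; Real.sin p.2, p.1 * Real.cos p.2]) with hB
  have B_det : ∀ p, (B p).det = p.1 := by
    intro p
    conv_rhs => rw [← one_mul p.1, ← Real.cos_sq_add_sin_sq p.2]
    simp only [hB, neg_mul, LinearMap.det_toContinuousLinearMap, LinearMap.det_toLin,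
      Matrix.det_fin_two_of, sub_neg_eq_add]
    ring
  have hsub : s ⊆ polarCoord.target := by
    rintro p ⟨hp1, hp2⟩
    exact ⟨lt_trans h0 hp1.1, hp2⟩
  have hderiv : ∀ p ∈ s, HasFDerivWithinAt polarCoord.symm (B p) s p := fun p _ =>
    (hasFDerivAt_polarCoord_symm p).hasFDerivWithinAt
  have hinj : Set.InjOn polarCoord.symm s :=
    polarCoord.symm.injOn.mono (by rw [OpenPartialHomeomorph.symm_source]; exact hsub)
  have hgmeas : Measurable (fun q : ℝ × ℝ => ENNReal.ofReal (F (q.1 + q.2 * Complex.I))) := by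
    apply ENNReal.measurable_ofReal.comp
    exact (measurable_Fen w).comp
      ((Complex.measurable_ofReal.comp measurable_fst).add
        ((Complex.measurable_ofReal.comp measurable_snd).mul_const Complex.I))
  have himg := lintegral_image_eq_lintegral_abs_det_fderiv_mul volume hs hderiv hinj
    (fun q : ℝ × ℝ => ENNReal.ofReal (F (q.1 + q.2 * Complex.I)))
  have hstep1 : ∫⁻ p in s, ENNReal.ofReal (p.1 * F (circleMap 0 p.1 p.2))
      = ∫⁻ q in polarCoord.symm '' s,
          ENNReal.ofReal (F (q.1 + q.2 * Complex.I)) := by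
    rw [himg]
    apply setLIntegral_congr_fun_ae hs
    apply Filter.Eventually.of_forall
    intro p hp
    have hp1 : (0:ℝ) < p.1 := lt_trans h0 hp.1.1
    rw [B_det, abs_of_pos hp1, polar_point_eq p, ENNReal.ofReal_mul hp1.le]
  set S' : Set (ℝ × ℝ) := {q : ℝ × ℝ | (↑q.1 + ↑q.2 * Complex.I) ∈ PD} with hS'
  have hS'meas : MeasurableSet S' := by
    have : S' = (fun q : ℝ × ℝ => (↑q.1 + ↑q.2 * Complex.I)) ⁻¹' PD := rfl
    rw [this]
    apply MeasurableSet.preimage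
    · exact (measurableSet_lt measurable_const continuous_norm.measurable).inter
        (measurableSet_lt continuous_norm.measurable measurable_const)
    · exact (Complex.measurable_ofReal.comp measurable_fst).add
        ((Complex.measurable_ofReal.comp measurable_snd).mul_const Complex.I)
  have himg_sub : polarCoord.symm '' s ⊆ S' := by
    rintro q ⟨p, hp, rfl⟩
    rw [hS', Set.mem_setOf_eq, polar_point_eq p]
    have hp1 : (0:ℝ) < p.1 := lt_trans h0 hp.1.1
    constructor
    · rw [norm_circleMap_zero, abs_of_pos hp1]; exact hp1
    · rw [norm_circleMap_zero, abs_of_pos hp1]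
      exact lt_of_lt_of_le hp.1.2 hb1
  have hstep2 : ∫⁻ q in polarCoord.symm '' s,
      ENNReal.ofReal (F (↑q.1 + ↑q.2 * Complex.I))
      ≤ ∫⁻ q in S', ENNReal.ofReal (F (↑q.1 + ↑q.2 * Complex.I)) :=
    lintegral_mono_set himg_sub
  have hPDmeas : MeasurableSet PD := by
    have : PD = (fun z : ℂ => ‖z‖) ⁻¹' (Set.Ioo 0 1) := rfl
    rw [this]
    exact (isOpen_Ioo.preimage continuous_norm).measurableSet
  have hstep3 : ∫⁻ q in S', ENNReal.ofReal (F (↑q.1 + ↑q.2 * Complex.I))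
      = ∫⁻ z in PD, ENNReal.ofReal (F z) := by
    have hmp := Complex.volume_preserving_equiv_real_prod
    have hpre : ⇑Complex.measurableEquivRealProd ⁻¹' S' = PD := by
      ext z
      simp only [hS', Set.mem_preimage, Set.mem_setOf_eq,
        Complex.measurableEquivRealProd_apply, Complex.re_add_im]
    rw [← hmp.map_eq, setLIntegral_map hS'meas hgmeas hmp.measurable, hpre]
    apply setLIntegral_congr_fun_ae hPDmeas
    apply Filter.Eventually.of_forall
    intro z hz
    simp only [Complex.measurableEquivRealProd_apply, Complex.re_add_im]
  have hstep4 : ∫⁻ z in PD, ENNReal.ofReal (F z)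
      = ENNReal.ofReal (∫ z in PD, F z) := by
    rw [ofReal_integral_eq_lintegral_ofReal henergy]
    exact Filter.Eventually.of_forall (fun z => by unfold F; unfold Fen; positivity)
  rw [hstep1, ← hstep4, ← hstep3]
  exact hstep2

lemma continuous_polarMap : Continuous (fun p : ℝ × ℝ => circleMap 0 p.1 p.2) := by
  unfold circleMap
  fun_prop

lemma measurable_polar_integrand (w : ℂ → ℝ) :
    Measurable (fun p : ℝ × ℝ => ENNReal.ofReal (p.1 * Fen w (circleMap 0 p.1 p.2))) := by
  apply ENNReal.measurable_ofReal.comp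
  exact measurable_fst.mul ((measurable_Fen w).comp continuous_polarMap.measurable)

lemma polar_iterated {w : ℂ → ℝ}
    (henergy : IntegrableOn (Fen w) PD) {a b : ℝ} (h0 : 0 < a) (hab : a < b) (hb1 : b ≤ 1) :
    ∫⁻ ρ in Set.Ioo a b, (ENNReal.ofReal ρ *
        ∫⁻ θ in Set.Ioo (-π) π, ENNReal.ofReal (Fen w (circleMap 0 ρ θ)))
      ≤ ENNReal.ofReal (∫ z in PD, Fen w z) := by
  have key := polar_lint_le henergy h0 hab hb1
  have hrw : ∫⁻ p in Set.Ioo a b ×ˢ Set.Ioo (-π) π,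
      ENNReal.ofReal (p.1 * Fen w (circleMap 0 p.1 p.2))
      = ∫⁻ ρ in Set.Ioo a b, ∫⁻ θ in Set.Ioo (-π) π,
          ENNReal.ofReal (ρ * Fen w (circleMap 0 ρ θ)) := by
    rw [Measure.volume_eq_prod, ← Measure.prod_restrict]
    exact lintegral_prod _ (measurable_polar_integrand w).aemeasurable
  rw [hrw] at key
  refine le_trans (le_of_eq ?_) key
  apply setLIntegral_congr_fun_ae measurableSet_Ioo
  apply Filter.Eventually.of_forall
  intro ρ hρ
  have hρ0 : 0 ≤ ρ := (lt_trans h0 hρ.1).le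
  rw [← lintegral_const_mul _ (by
    exact ENNReal.measurable_ofReal.comp
      ((measurable_Fen w).comp (continuous_polarMap.comp
        (Continuous.prodMk_right ρ)).measurable))]
  apply setLIntegral_congr_fun_ae measurableSet_Ioo
  apply Filter.Eventually.of_forall
  intro θ hθ
  rw [ENNReal.ofReal_mul hρ0]

lemma lint_inv_Ioo {a b : ℝ} (h0 : 0 < a) (hab : a < b) :
    ∫⁻ ρ in Set.Ioo a b, ENNReal.ofReal ρ⁻¹
      = ENNReal.ofReal (Real.log b - Real.log a) := by
  have hcont : ContinuousOn (fun ρ : ℝ => ρ⁻¹) (Set.Icc a b) := by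
    apply ContinuousOn.inv₀ continuousOn_id
    intro x hx
    exact ne_of_gt (lt_of_lt_of_le h0 hx.1)
  have hint : IntegrableOn (fun ρ : ℝ => ρ⁻¹) (Set.Ioo a b) :=
    (hcont.integrableOn_Icc).mono_set Set.Ioo_subset_Icc_self
  rw [← ofReal_integral_eq_lintegral_ofReal hint]
  · congr 1
    rw [← MeasureTheory.integral_Ioc_eq_integral_Ioo,
      ← intervalIntegral.integral_of_le hab.le]
    rw [integral_inv (by
      rw [Set.uIcc_of_le hab.le]
      intro h
      exact absurd h.1 (not_le.mpr h0))]
    rw [Real.log_div (ne_of_gt (lt_trans h0 hab)) (ne_of_gt h0)]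
  · rw [EventuallyLE, ae_restrict_iff' measurableSet_Ioo]
    apply Filter.Eventually.of_forall
    intro x hx
    simp only [Pi.zero_apply]
    exact (inv_nonneg).mpr (lt_trans h0 hx.1).le

section Wlemmas2

variable {w : ℂ → ℝ} (hC2 : ContDiffOn ℝ 2 w PD)
include hC2

lemma cont_Fen_on_PD : ContinuousOn (Fen w) PD := by
  have h := cont_fderiv_on_PD hC2
  have h1 : ContinuousOn (pdX w) PD := h.clm_apply continuousOn_const
  have h2 : ContinuousOn (pdY w) PD := h.clm_apply continuousOn_const
  exact ((h1.pow 2).add (h2.pow 2))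

lemma cont_Fen_circle {r : ℝ} (h0 : 0 < r) (h1 : r < 1) :
    Continuous (fun θ => Fen w (circleMap 0 r θ)) :=
  (cont_Fen_on_PD hC2).comp_continuous (continuous_circleMap 0 r)
    (fun θ => circleMap_mem_PD h0 h1 θ)

lemma lint_circle_eq_real {r : ℝ} (h0 : 0 < r) (h1 : r < 1) :
    ∫⁻ θ in Set.Ioo (-π) π, ENNReal.ofReal (Fen w (circleMap 0 r θ))
      = ENNReal.ofReal (∫ θ in (-π)..π, Fen w (circleMap 0 r θ)) := by
  have hcont := cont_Fen_circle hC2 h0 h1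
  have hint : IntegrableOn (fun θ => Fen w (circleMap 0 r θ)) (Set.Ioo (-π) π) :=
    (hcont.continuousOn.integrableOn_Icc).mono_set Set.Ioo_subset_Icc_self
  rw [← ofReal_integral_eq_lintegral_ofReal hint]
  · congr 1
    rw [intervalIntegral.integral_of_le (by linarith [Real.pi_pos] : -π ≤ π),
      MeasureTheory.integral_Ioc_eq_integral_Ioo]
  · rw [EventuallyLE, ae_restrict_iff' measurableSet_Ioo]
    exact Filter.Eventually.of_forall (fun θ _ => Fen_nonneg w _)

lemma good_radius (henergy : IntegrableOn (Fen w) PD)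
    {δ : ℝ} (hδ0 : 0 < δ) (hδ1 : δ < 1/4) :
    ∃ r, δ < r ∧ r < Real.sqrt δ ∧
      (∫ θ in (-π)..π, Fen w (circleMap 0 r θ)) * r ^ 2
        ≤ ((∫ z in PD, Fen w z) + 1) / (Real.log (Real.sqrt δ) - Real.log δ) := by
  set b := Real.sqrt δ with hb
  set Etot := ∫ z in PD, Fen w z with hEtot
  have hE0 : 0 ≤ Etot := setIntegral_nonneg (isOpen_PD.measurableSet)
    (fun z _ => Fen_nonneg w z)
  have hδb : δ < b := by
    rw [hb]
    exact (Real.lt_sqrt hδ0.le).mpr (by nlinarith)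
  have hb1 : b < 1/2 := by
    rw [hb, show (1:ℝ)/2 = Real.sqrt ((1:ℝ)/4) by
      rw [show (1:ℝ)/4 = (1/2)^2 by norm_num, Real.sqrt_sq (by norm_num)]]
    exact Real.sqrt_lt_sqrt hδ0.le hδ1
  set L' := Real.log b - Real.log δ with hL'
  have hL'0 : 0 < L' := by
    rw [hL']
    have := Real.log_lt_log hδ0 hδb
    linarith
  by_contra hcon
  push_neg at hcon
  have key := polar_iterated henergy hδ0 hδb (by linarith)
  have hlower : ∀ ρ ∈ Set.Ioo δ b,
      ENNReal.ofReal ((Etot + 1)/L') * ENNReal.ofReal ρ⁻¹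
        ≤ ENNReal.ofReal ρ *
          ∫⁻ θ in Set.Ioo (-π) π, ENNReal.ofReal (Fen w (circleMap 0 ρ θ)) := by
    intro ρ hρ
    have hρ0 : 0 < ρ := lt_trans hδ0 hρ.1
    have hρ1 : ρ < 1 := by linarith [hρ.2, hb1]
    rw [lint_circle_eq_real hC2 hρ0 hρ1, ← ENNReal.ofReal_mul hρ0.le,
      ← ENNReal.ofReal_mul (by positivity)]
    apply ENNReal.ofReal_le_ofReal
    have hgt := hcon ρ hρ.1 hρ.2
    have hFc0 : 0 ≤ ∫ θ in (-π)..π, Fen w (circleMap 0 ρ θ) := by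
      apply intervalIntegral.integral_nonneg (by linarith [Real.pi_pos])
      exact fun θ _ => Fen_nonneg w _
    calc (Etot + 1)/L' * ρ⁻¹
        ≤ ((∫ θ in (-π)..π, Fen w (circleMap 0 ρ θ)) * ρ^2) * ρ⁻¹ := by
          apply mul_le_mul_of_nonneg_right hgt.le (by positivity)
      _ = ρ * ((∫ θ in (-π)..π, Fen w (circleMap 0 ρ θ)) * ρ * ρ⁻¹ ) := by ring
      _ = ρ * (∫ θ in (-π)..π, Fen w (circleMap 0 ρ θ)) := by
          rw [mul_assoc, mul_inv_cancel₀ (ne_of_gt hρ0), mul_one]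
  have hlow2 : ENNReal.ofReal ((Etot + 1)/L') * ENNReal.ofReal L'
      ≤ ENNReal.ofReal Etot := by
    calc ENNReal.ofReal ((Etot + 1)/L') * ENNReal.ofReal L'
        = ENNReal.ofReal ((Etot + 1)/L') * ∫⁻ ρ in Set.Ioo δ b, ENNReal.ofReal ρ⁻¹ := by
          rw [lint_inv_Ioo hδ0 hδb]
      _ = ∫⁻ ρ in Set.Ioo δ b, ENNReal.ofReal ((Etot + 1)/L') * ENNReal.ofReal ρ⁻¹ := by
          rw [lintegral_const_mul _ measurable_inv.ennreal_ofReal]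
      _ ≤ ∫⁻ ρ in Set.Ioo δ b, ENNReal.ofReal ρ *
            ∫⁻ θ in Set.Ioo (-π) π, ENNReal.ofReal (Fen w (circleMap 0 ρ θ)) := by
          apply setLIntegral_mono_ae' measurableSet_Ioo
          exact Filter.Eventually.of_forall hlower
      _ ≤ ENNReal.ofReal Etot := key
  rw [← ENNReal.ofReal_mul (by positivity), div_mul_cancel₀ _ (ne_of_gt hL'0)] at hlow2
  have := (ENNReal.ofReal_le_ofReal_iff hE0).mp hlow2
  linarith

end Wlemmas2

lemma ofReal_integral_le {α : Type*} [MeasurableSpace α] {μ : Measure α} {f : α → ℝ}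
    (hf : Integrable f μ) :
    ENNReal.ofReal (∫ x, f x ∂μ) ≤ ∫⁻ x, ENNReal.ofReal (f x) ∂μ := by
  have hpos : Integrable (fun x => max (f x) 0) μ := hf.pos_part
  have h1 : ∫ x, f x ∂μ ≤ ∫ x, max (f x) 0 ∂μ :=
    integral_mono hf hpos (fun x => le_max_left _ _)
  calc ENNReal.ofReal (∫ x, f x ∂μ) ≤ ENNReal.ofReal (∫ x, max (f x) 0 ∂μ) :=
        ENNReal.ofReal_le_ofReal h1
    _ = ∫⁻ x, ENNReal.ofReal (max (f x) 0) ∂μ :=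
        ofReal_integral_eq_lintegral_ofReal hpos
          (Filter.Eventually.of_forall (fun x => le_max_right _ _))
    _ = ∫⁻ x, ENNReal.ofReal (f x) ∂μ := by
        apply lintegral_congr
        intro x
        rcases le_total (f x) 0 with h | h
        · rw [max_eq_right h, ENNReal.ofReal_zero, ENNReal.ofReal_of_nonpos h]
        · rw [max_eq_left h]

section Wlemmas3

variable {w : ℂ → ℝ} (hC2 : ContDiffOn ℝ 2 w PD)
include hC2

lemma radial_ftc {r : ℝ} (h0 : 0 < r) (hr : r < 1/2) (θ : ℝ) :
    w (circleMap 0 r θ) ≤ w (circleMap 0 (1/2) θ)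
      + ∫ ρ in r..(1/2), |fderiv ℝ w (circleMap 0 ρ θ) (circleMap 0 1 θ)| := by
  have hab : r ≤ 1/2 := hr.le
  have hg : ∀ ρ ∈ Set.uIcc r (1/2), HasDerivAt (fun ρ => w (circleMap 0 ρ θ))
      (fderiv ℝ w (circleMap 0 ρ θ) (circleMap 0 1 θ)) ρ := by
    intro ρ hρ
    rw [Set.uIcc_of_le hab] at hρ
    exact hasDerivAt_ray_comp hC2 (lt_of_lt_of_le h0 hρ.1)
      (lt_of_le_of_lt hρ.2 (by norm_num)) θ
  have hcont := cont_ray_deriv hC2 h0 (by norm_num : (1:ℝ)/2 < 1) hab θ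
  have h := ftc_abs hab hg hcont
  have h2 := le_abs_self ((fun ρ => w (circleMap 0 ρ θ)) r - (fun ρ => w (circleMap 0 ρ θ)) (1/2))
  rw [abs_sub_comm] at h2
  simp only at h2
  linarith

lemma circle_osc {r : ℝ} (h0 : 0 < r) (h1 : r < 1) {θ₁ θ₂ : ℝ}
    (hθ₁ : θ₁ ∈ Set.Icc (-π) π) (hθ₂ : θ₂ ∈ Set.Icc (-π) π) :
    w (circleMap 0 r θ₁) ≤ w (circleMap 0 r θ₂)
      + (1/2 * ((∫ θ in (-π)..π, Fen w (circleMap 0 r θ)) * r^2) + π) := by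
  set u' : ℝ → ℝ := fun θ => fderiv ℝ w (circleMap 0 r θ) (circleMap 0 r θ * Complex.I)
    with hu'
  have hder : ∀ θ, HasDerivAt (fun θ => w (circleMap 0 r θ)) (u' θ) θ :=
    fun θ => hasDerivAt_circle_comp hC2 h0 h1 θ
  have hcont : Continuous u' := cont_circle_deriv hC2 h0 h1
  have hFcont : Continuous (fun θ => Fen w (circleMap 0 r θ)) := cont_Fen_circle hC2 h0 h1
  have hptwise : ∀ θ, |u' θ| ≤ 1/2 * (Fen w (circleMap 0 r θ) * r^2) + 1/2 := by
    intro θ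
    have hsq : (u' θ)^2 ≤ Fen w (circleMap 0 r θ) * r^2 := by
      have hthis := fderiv_apply_sq_le w (circleMap 0 r θ) (circleMap 0 r θ * Complex.I)
      have habs : ‖circleMap 0 r θ * Complex.I‖ = r := by
        rw [norm_mul, norm_circleMap_zero, Complex.norm_I, abs_of_pos h0, mul_one]
      rw [habs] at hthis
      calc (u' θ)^2 ≤ r ^ 2 * Fen w (circleMap 0 r θ) := hthis
        _ = Fen w (circleMap 0 r θ) * r^2 := by ring
    have := amgm hsq one_pos one_pos
    calc |u' θ| ≤ 1/2 * (1 * (Fen w (circleMap 0 r θ) * r^2)) + 1/(2*1*1) := by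
          simpa using this
      _ = 1/2 * (Fen w (circleMap 0 r θ) * r^2) + 1/2 := by ring
  have hmain : ∀ a b : ℝ, a ∈ Set.Icc (-π) π → b ∈ Set.Icc (-π) π → a ≤ b →
      |w (circleMap 0 r b) - w (circleMap 0 r a)| ≤
        1/2 * ((∫ θ in (-π)..π, Fen w (circleMap 0 r θ)) * r^2) + π := by
    intro a b ha hb hab
    have hftc := ftc_abs hab (fun t _ => hder t) hcont.continuousOn
    have h2 : |w (circleMap 0 r b) - w (circleMap 0 r a)| ≤ ∫ t in a..b, |u' t| := hftc
    have h3 : ∫ t in a..b, |u' t| ≤ ∫ t in (-π)..π, |u' t| := by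
      apply intervalIntegral.integral_mono_interval ha.1 hab hb.2
      · exact Filter.Eventually.of_forall (fun t => abs_nonneg _)
      · exact (hcont.abs).intervalIntegrable _ _
    have h4 : ∫ t in (-π)..π, |u' t| ≤
        ∫ t in (-π)..π, (1/2 * (Fen w (circleMap 0 r t) * r^2) + 1/2) := by
      apply intervalIntegral.integral_mono_on (by linarith [Real.pi_pos])
        ((hcont.abs).intervalIntegrable _ _)
        ((((continuous_const.mul (hFcont.mul continuous_const))).add
        continuous_const).intervalIntegrable _ _)
      exact fun t _ => hptwise t
    have h5 : ∫ t in (-π)..π, (1/2 * (Fen w (circleMap 0 r t) * r^2) + 1/2)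
        = 1/2 * ((∫ θ in (-π)..π, Fen w (circleMap 0 r θ)) * r^2) + π := by
      rw [show (fun t => 1/2 * (Fen w (circleMap 0 r t) * r^2) + 1/2)
          = fun t => (1/2 * (Fen w (circleMap 0 r t) * r^2)) + 1/2 from rfl,
        intervalIntegral.integral_add
        ((show Continuous fun t => 1/2 * (Fen w (circleMap 0 r t) * r^2) from
          continuous_const.mul (hFcont.mul continuous_const)).intervalIntegrable _ _)
        (intervalIntegrable_const)]
      rw [intervalIntegral.integral_const]
      have : (fun t => 1/2 * (Fen w (circleMap 0 r t) * r^2))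
          = fun t => (1/2 * r^2) * Fen w (circleMap 0 r t) := by funext t; ring
      rw [this, intervalIntegral.integral_const_mul]
      simp only [smul_eq_mul]
      ring
    linarith
  rcases le_total θ₁ θ₂ with h | h
  · have h1 := hmain θ₁ θ₂ hθ₁ hθ₂ h
    have h2 : w (circleMap 0 r θ₁) - w (circleMap 0 r θ₂)
        ≤ |w (circleMap 0 r θ₂) - w (circleMap 0 r θ₁)| := by
      rw [abs_sub_comm]; exact le_abs_self _
    linarith
  · have h1 := hmain θ₂ θ₁ hθ₂ hθ₁ h
    have h2 : w (circleMap 0 r θ₁) - w (circleMap 0 r θ₂)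
        ≤ |w (circleMap 0 r θ₁) - w (circleMap 0 r θ₂)| := le_abs_self _
    linarith

end Wlemmas3

lemma measurable_D (w : ℂ → ℝ) :
    Measurable (fun p : ℝ × ℝ => fderiv ℝ w (circleMap 0 p.1 p.2) (circleMap 0 1 p.2)) := by
  have h1 : Measurable (fun p : ℝ × ℝ =>
      ((fderiv ℝ w (circleMap 0 p.1 p.2) : ℂ →L[ℝ] ℝ), circleMap 0 1 p.2)) :=
    ((measurable_fderiv ℝ w).comp continuous_polarMap.measurable).prodMk
      ((continuous_circleMap 0 1).comp continuous_snd).measurable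
  exact isBoundedBilinearMap_apply.continuous.measurable.comp h1

section Wlemmas4

variable {w : ℂ → ℝ} (hC2 : ContDiffOn ℝ 2 w PD)
include hC2

lemma radial_mean (henergy : IntegrableOn (Fen w) PD) {r lam : ℝ}
    (h0 : 0 < r) (hr : r < 1/2) (hlam : 0 < lam)
    {θm : ℝ} (hθm : ∀ θ ∈ Set.Icc (-π) π, w (circleMap 0 r θm) ≤ w (circleMap 0 r θ)) :
    2 * π * w (circleMap 0 r θm)
      ≤ (∫ θ in (-π)..π, w (circleMap 0 (1/2:ℝ) θ))
        + (lam / 2 * (∫ z in PD, Fen w z)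
          + 2 * π * (1 / (2 * lam) * (Real.log (1/2) - Real.log r))) := by
  have hpi := Real.pi_pos
  set Etot := ∫ z in PD, Fen w z with hEt
  have hE0 : 0 ≤ Etot := setIntegral_nonneg isOpen_PD.measurableSet (fun z _ => Fen_nonneg w z)
  have hWhalf_cont : Continuous (fun θ : ℝ => w (circleMap 0 (1/2:ℝ) θ)) :=
    (hC2.continuousOn).comp_continuous (continuous_circleMap 0 _)
      (fun θ => circleMap_mem_PD (by norm_num) (by norm_num) θ)
  set C2 := ∫ θ in (-π)..π, w (circleMap 0 (1/2:ℝ) θ) with hC2def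
  set g : ℝ → ℝ := fun θ => w (circleMap 0 r θm) - w (circleMap 0 (1/2:ℝ) θ) with hgdef
  have hgint : IntegrableOn g (Set.Ioo (-π) π) :=
    ((continuous_const.sub hWhalf_cont).continuousOn.integrableOn_Icc).mono_set
      Set.Ioo_subset_Icc_self
  have hIoovol : (volume (Set.Ioo (-π) π)) = ENNReal.ofReal (2*π) := by
    rw [Real.volume_Ioo]; congr 1; ring
  have hgval : ∫ θ in Set.Ioo (-π) π, g θ = 2*π*(w (circleMap 0 r θm)) - C2 := by
    rw [hgdef]; beta_reduce
    rw [integral_sub (μ := volume.restrict (Set.Ioo (-π) π)) (show IntegrableOn (fun _ => w (circleMap 0 r θm)) (Set.Ioo (-π) π) volume from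
        integrableOn_const (by rw [hIoovol]; exact ENNReal.ofReal_ne_top) enorm_ne_top)
      (hWhalf_cont.continuousOn.integrableOn_Icc.mono_set Set.Ioo_subset_Icc_self)]
    rw [setIntegral_const, measureReal_def, hIoovol, ENNReal.toReal_ofReal (by positivity), smul_eq_mul]
    rw [show ∫ θ in Set.Ioo (-π) π, w (circleMap 0 (1/2:ℝ) θ) = C2 by
      rw [hC2def, intervalIntegral.integral_of_le (by linarith), integral_Ioc_eq_integral_Ioo]]
  -- step 1 : into lintegral
  have step1 : ENNReal.ofReal (∫ θ in Set.Ioo (-π) π, g θ)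
      ≤ ∫⁻ θ in Set.Ioo (-π) π, ENNReal.ofReal (g θ) := ofReal_integral_le hgint
  -- step 2 : pointwise domination by iterated integral
  have step2 : ∫⁻ θ in Set.Ioo (-π) π, ENNReal.ofReal (g θ)
      ≤ ∫⁻ θ in Set.Ioo (-π) π, ∫⁻ ρ in Set.Ioo r (1/2),
          ENNReal.ofReal (lam/2*(ρ * Fen w (circleMap 0 ρ θ)) + 1/(2*lam*ρ)) := by
    apply setLIntegral_mono' measurableSet_Ioo
    intro θ hθ
    have hmono := hθm θ (Set.Ioo_subset_Icc_self hθ)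
    have hftc := radial_ftc hC2 h0 hr θ
    set Rad := ∫ ρ in r..(1/2), |fderiv ℝ w (circleMap 0 ρ θ) (circleMap 0 1 θ)| with hRad
    have hgR : g θ ≤ Rad := by rw [hgdef]; simp only; linarith
    have hDcont : ContinuousOn (fun ρ => fderiv ℝ w (circleMap 0 ρ θ) (circleMap 0 1 θ))
        (Set.uIcc r (1/2)) := cont_ray_deriv hC2 h0 (by norm_num) hr.le θ
    have hDint : IntegrableOn
        (fun ρ => |fderiv ℝ w (circleMap 0 ρ θ) (circleMap 0 1 θ)|) (Set.Ioo r (1/2)) := by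
      have h := hDcont.abs
      rw [Set.uIcc_of_le hr.le] at h
      exact h.integrableOn_Icc.mono_set Set.Ioo_subset_Icc_self
    have hRadeq : ENNReal.ofReal Rad = ∫⁻ ρ in Set.Ioo r (1/2),
        ENNReal.ofReal (|fderiv ℝ w (circleMap 0 ρ θ) (circleMap 0 1 θ)|) := by
      rw [hRad, intervalIntegral.integral_of_le hr.le, integral_Ioc_eq_integral_Ioo,
        ofReal_integral_eq_lintegral_ofReal hDint]
      rw [EventuallyLE, ae_restrict_iff' measurableSet_Ioo]
      exact Filter.Eventually.of_forall (fun ρ _ => abs_nonneg _)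
    calc ENNReal.ofReal (g θ) ≤ ENNReal.ofReal Rad := ENNReal.ofReal_le_ofReal hgR
      _ = _ := hRadeq
      _ ≤ ∫⁻ ρ in Set.Ioo r (1/2),
          ENNReal.ofReal (lam/2*(ρ * Fen w (circleMap 0 ρ θ)) + 1/(2*lam*ρ)) := by
        apply setLIntegral_mono' measurableSet_Ioo
        intro ρ hρ
        apply ENNReal.ofReal_le_ofReal
        have hρ0 : 0 < ρ := lt_trans h0 hρ.1
        have hsq : (fderiv ℝ w (circleMap 0 ρ θ) (circleMap 0 1 θ))^2
            ≤ Fen w (circleMap 0 ρ θ) := by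
          have hthis := fderiv_apply_sq_le w (circleMap 0 ρ θ) (circleMap 0 1 θ)
          have habs : ‖circleMap 0 1 θ‖ = 1 := by
            rw [norm_circleMap_zero]; norm_num
          rw [habs] at hthis
          simpa using hthis
        exact amgm hsq hρ0 hlam
  -- step 3 : iterated to product
  have hjointmeas : Measurable (fun p : ℝ × ℝ =>
      ENNReal.ofReal (lam/2*(p.1 * Fen w (circleMap 0 p.1 p.2)) + 1/(2*lam*p.1))) := by
    apply Measurable.ennreal_ofReal
    apply Measurable.add
    · exact (measurable_fst.mul
        ((measurable_Fen w).comp continuous_polarMap.measurable)).const_mul (lam/2)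
    · apply Measurable.div measurable_const
      exact measurable_fst.const_mul (2*lam)
  have step3 : ∫⁻ θ in Set.Ioo (-π) π, ∫⁻ ρ in Set.Ioo r (1/2),
        ENNReal.ofReal (lam/2*(ρ * Fen w (circleMap 0 ρ θ)) + 1/(2*lam*ρ))
      = ∫⁻ p in Set.Ioo r (1/2) ×ˢ Set.Ioo (-π) π,
          ENNReal.ofReal (lam/2*(p.1 * Fen w (circleMap 0 p.1 p.2)) + 1/(2*lam*p.1)) := by
    rw [Measure.volume_eq_prod, ← Measure.prod_restrict,
      lintegral_prod_symm _ hjointmeas.aemeasurable]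
  -- step 4 : split and bound
  have hXmeas : Measurable (fun p : ℝ × ℝ =>
      ENNReal.ofReal (lam/2*(p.1 * Fen w (circleMap 0 p.1 p.2)))) :=
    ((measurable_fst.mul
      ((measurable_Fen w).comp continuous_polarMap.measurable)).const_mul (lam/2)).ennreal_ofReal
  have step4 : ∫⁻ p in Set.Ioo r (1/2) ×ˢ Set.Ioo (-π) π,
        ENNReal.ofReal (lam/2*(p.1 * Fen w (circleMap 0 p.1 p.2)) + 1/(2*lam*p.1))
      ≤ ENNReal.ofReal (lam/2 * Etot)
        + ENNReal.ofReal (2*π*(1/(2*lam))*(Real.log (1/2) - Real.log r)) := by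
    have hsplit : ∫⁻ p in Set.Ioo r (1/2) ×ˢ Set.Ioo (-π) π,
        ENNReal.ofReal (lam/2*(p.1 * Fen w (circleMap 0 p.1 p.2)) + 1/(2*lam*p.1))
        = (∫⁻ p in Set.Ioo r (1/2) ×ˢ Set.Ioo (-π) π,
            ENNReal.ofReal (lam/2*(p.1 * Fen w (circleMap 0 p.1 p.2))))
          + ∫⁻ p in Set.Ioo r (1/2) ×ˢ Set.Ioo (-π) π,
            ENNReal.ofReal (1/(2*lam*p.1)) := by
      rw [← lintegral_add_left hXmeas]
      apply setLIntegral_congr_fun_ae (measurableSet_Ioo.prod measurableSet_Ioo)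
      apply Filter.Eventually.of_forall
      rintro p hp
      have hp0 : 0 < p.1 := lt_trans h0 hp.1.1
      have hF := Fen_nonneg w (circleMap 0 p.1 p.2)
      rw [ENNReal.ofReal_add
        (mul_nonneg (by positivity) (mul_nonneg hp0.le hF)) (by positivity)]
    rw [hsplit]
    apply add_le_add
    · -- X part
      have hXeq : ∫⁻ p in Set.Ioo r (1/2) ×ˢ Set.Ioo (-π) π,
          ENNReal.ofReal (lam/2*(p.1 * Fen w (circleMap 0 p.1 p.2)))
          = ENNReal.ofReal (lam/2) * ∫⁻ p in Set.Ioo r (1/2) ×ˢ Set.Ioo (-π) π,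
              ENNReal.ofReal (p.1 * Fen w (circleMap 0 p.1 p.2)) := by
        rw [← lintegral_const_mul _ (measurable_polar_integrand w)]
        apply setLIntegral_congr_fun_ae (measurableSet_Ioo.prod measurableSet_Ioo)
        apply Filter.Eventually.of_forall
        intro p hp
        rw [← ENNReal.ofReal_mul (by positivity)]
      rw [hXeq]
      calc ENNReal.ofReal (lam/2) * ∫⁻ p in Set.Ioo r (1/2) ×ˢ Set.Ioo (-π) π,
            ENNReal.ofReal (p.1 * Fen w (circleMap 0 p.1 p.2))
          ≤ ENNReal.ofReal (lam/2) * ENNReal.ofReal Etot := by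
            apply mul_le_mul_right
            exact polar_lint_le henergy h0 hr (by norm_num)
        _ = ENNReal.ofReal (lam/2 * Etot) := by
            rw [← ENNReal.ofReal_mul (by positivity : (0:ℝ) ≤ lam/2)]
    · -- Y part
      have hYmeas : Measurable (fun p : ℝ × ℝ => ENNReal.ofReal (1/(2*lam*p.1))) := by
        apply Measurable.ennreal_ofReal
        exact Measurable.div measurable_const (measurable_fst.const_mul (2*lam))
      have hYiter : ∫⁻ p in Set.Ioo r (1/2) ×ˢ Set.Ioo (-π) π,
          ENNReal.ofReal (1/(2*lam*p.1))
          = ∫⁻ ρ in Set.Ioo r (1/2), ∫⁻ _θ in Set.Ioo (-π) π,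
              ENNReal.ofReal (1/(2*lam*ρ)) := by
        rw [Measure.volume_eq_prod, ← Measure.prod_restrict,
          lintegral_prod _ hYmeas.aemeasurable]
      rw [hYiter]
      refine le_of_eq ?_
      have hconst : ∀ ρ : ℝ, ∫⁻ _θ in Set.Ioo (-π) π, ENNReal.ofReal (1/(2*lam*ρ))
          = ENNReal.ofReal (2*π) * ENNReal.ofReal (1/(2*lam*ρ)) := by
        intro ρ
        rw [setLIntegral_const, hIoovol, mul_comm]
      calc ∫⁻ ρ in Set.Ioo r (1/2), ∫⁻ _θ in Set.Ioo (-π) π, ENNReal.ofReal (1/(2*lam*ρ))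
          = ENNReal.ofReal (2*π) * ∫⁻ ρ in Set.Ioo r (1/2), ENNReal.ofReal (1/(2*lam*ρ)) := by
            rw [← lintegral_const_mul _ (by
              exact (Measurable.div measurable_const
                (measurable_id.const_mul (2*lam))).ennreal_ofReal)]
            apply setLIntegral_congr_fun_ae measurableSet_Ioo
            exact Filter.Eventually.of_forall (fun ρ _ => hconst ρ)
        _ = ENNReal.ofReal (2*π) * (ENNReal.ofReal (1/(2*lam))
              * ∫⁻ ρ in Set.Ioo r (1/2), ENNReal.ofReal ρ⁻¹) := by
            congr 1
            rw [← lintegral_const_mul _ measurable_inv.ennreal_ofReal]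
            apply setLIntegral_congr_fun_ae measurableSet_Ioo
            apply Filter.Eventually.of_forall
            intro ρ hρ
            rw [← ENNReal.ofReal_mul (by positivity : (0:ℝ) ≤ 1/(2*lam))]
            congr 1
            rw [one_div, mul_inv, one_div]
        _ = ENNReal.ofReal (2*π*(1/(2*lam))*(Real.log (1/2) - Real.log r)) := by
            rw [lint_inv_Ioo h0 hr, ← ENNReal.ofReal_mul (by positivity : (0:ℝ) ≤ 1/(2*lam)),
              ← ENNReal.ofReal_mul (by positivity : (0:ℝ) ≤ 2*π)]
            congr 1
            ring
  -- combine
  have hlogpos : 0 ≤ Real.log (1/2) - Real.log r := by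
    have := Real.log_le_log h0 hr.le
    linarith
  have htot : ENNReal.ofReal (2*π*(w (circleMap 0 r θm)) - C2)
      ≤ ENNReal.ofReal (lam/2 * Etot + 2*π*(1/(2*lam))*(Real.log (1/2) - Real.log r)) := by
    rw [← hgval, ENNReal.ofReal_add (by positivity) (by positivity)]
    exact le_trans step1 (le_trans step2 (le_trans (le_of_eq step3) step4))
  have hreal := (ENNReal.ofReal_le_ofReal_iff (by positivity)).mp htot
  linarith

end Wlemmas4

lemma key_small_circle {w : ℂ → ℝ} (hC2 : ContDiffOn ℝ 2 w PD)
    (henergy : IntegrableOn (Fen w) PD)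
    {ε c A : ℝ} (hε : 0 < ε) (hc : 0 < c) :
    ∃ r : ℝ, 0 < r ∧ r < c ∧ ∀ ζ : ℂ, ‖ζ‖ = r → w ζ + ε * Real.log r ≤ A := by
  have hpi := Real.pi_pos
  set Etot := ∫ z in PD, Fen w z with hEt
  have hE0 : 0 ≤ Etot := setIntegral_nonneg isOpen_PD.measurableSet (fun z _ => Fen_nonneg w z)
  set C2 := ∫ θ in (-π)..π, w (circleMap 0 (1/2:ℝ) θ) with hC2def
  set K : ℝ := C2/(2*π) + ((1/ε)/2*Etot)/(2*π) + (ε/2)*Real.log (1/2) + (Etot+1)/2 + π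
    with hK
  set T : ℝ := (A - K)*(4/ε) with hT
  set δ : ℝ := min (min (Real.exp T) (Real.exp (-2))) (min (c^2/2) (1/5)) with hδ
  have hδ0 : 0 < δ :=
    lt_min (lt_min (Real.exp_pos T) (Real.exp_pos (-2))) (lt_min (by positivity) (by norm_num))
  have hδ5 : δ ≤ 1/5 := le_trans (min_le_right _ _) (min_le_right _ _)
  have hδ1 : δ < 1/4 := lt_of_le_of_lt hδ5 (by norm_num)
  have hδc2 : δ < c^2 := by
    have h1 : δ ≤ c^2/2 := le_trans (min_le_right _ _) (min_le_left _ _)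
    nlinarith
  have hδexpT : δ ≤ Real.exp T := le_trans (min_le_left _ _) (min_le_left _ _)
  have hδexp2 : δ ≤ Real.exp (-2) := le_trans (min_le_left _ _) (min_le_right _ _)
  have hlogδT : Real.log δ ≤ T := by
    calc Real.log δ ≤ Real.log (Real.exp T) := Real.log_le_log hδ0 hδexpT
      _ = T := Real.log_exp T
  have hlogδ2 : Real.log δ ≤ -2 := by
    calc Real.log δ ≤ Real.log (Real.exp (-2)) := Real.log_le_log hδ0 hδexp2
      _ = -2 := Real.log_exp _
  have hsqrtc : Real.sqrt δ < c := by
    calc Real.sqrt δ < Real.sqrt (c^2) := Real.sqrt_lt_sqrt hδ0.le hδc2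
      _ = c := Real.sqrt_sq hc.le
  have hsqrt_half : Real.sqrt δ < 1/2 := by
    have : Real.sqrt δ < Real.sqrt (1/4) :=
      Real.sqrt_lt_sqrt hδ0.le (lt_of_le_of_lt hδ5 (by norm_num))
    calc Real.sqrt δ < Real.sqrt (1/4) := this
      _ = 1/2 := by
        rw [show (1:ℝ)/4 = (1/2)^2 by norm_num, Real.sqrt_sq (by norm_num)]
  obtain ⟨r, hδr, hrsq, hgr⟩ := good_radius hC2 henergy hδ0 hδ1
  have h0r : 0 < r := lt_trans hδ0 hδr
  have hr_half : r < 1/2 := lt_trans hrsq hsqrt_half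
  have hr1 : r < 1 := by linarith
  have hrc : r < c := lt_trans hrsq hsqrtc
  set L' := Real.log (Real.sqrt δ) - Real.log δ with hL'
  have hL'eq : L' = -Real.log δ/2 := by
    rw [hL', Real.log_sqrt hδ0.le]; ring
  have hL'1 : (1:ℝ) ≤ L' := by rw [hL'eq]; linarith
  -- minimum on the circle of radius r
  have hucont : Continuous (fun θ : ℝ => w (circleMap 0 r θ)) :=
    (hC2.continuousOn).comp_continuous (continuous_circleMap 0 r)
      (fun θ => circleMap_mem_PD h0r hr1 θ)
  obtain ⟨θm, hθmIcc, hθmmin⟩ := (isCompact_Icc (a := -π) (b := π)).exists_isMinOn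
    ⟨0, by constructor <;> linarith⟩ hucont.continuousOn
  have hθm : ∀ θ ∈ Set.Icc (-π) π, w (circleMap 0 r θm) ≤ w (circleMap 0 r θ) :=
    fun θ hθ => hθmmin hθ
  -- radial mean estimate with lam = 1/ε
  have hrm := radial_mean hC2 henergy h0r hr_half (by positivity : (0:ℝ) < 1/ε) hθm
  set Lr := Real.log r with hLr
  have hu : w (circleMap 0 r θm) ≤ C2/(2*π) + ((1/ε)/2*Etot)/(2*π)
      + (ε/2)*Real.log (1/2) - (ε/2)*Lr := by
    have h2pi : (0:ℝ) < 2*π := by positivity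
    rw [← mul_le_mul_iff_right₀ h2pi]
    refine le_trans hrm (le_of_eq ?_)
    have h1 : 1/(2*(1/ε)) = ε/2 := by field_simp
    rw [h1]
    field_simp
    ring
  refine ⟨r, h0r, hrc, ?_⟩
  intro ζ hζ
  have hζarg : ζ.arg ∈ Set.Icc (-π) π := ⟨(Complex.neg_pi_lt_arg ζ).le, Complex.arg_le_pi ζ⟩
  have hζeq : circleMap 0 r ζ.arg = ζ := by
    have := Complex.norm_mul_exp_arg_mul_I ζ
    rw [hζ] at this
    simpa [circleMap] using this
  have hosc := circle_osc hC2 h0r hr1 hζarg hθmIcc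
  rw [hζeq] at hosc
  -- bounds on oscillation term
  have hf2 : (∫ θ in (-π)..π, Fen w (circleMap 0 r θ)) * r^2 ≤ Etot + 1 := by
    refine le_trans hgr ?_
    exact div_le_self (by linarith) hL'1
  -- log bounds
  have hLrlog : Lr ≤ Real.log δ / 2 := by
    rw [hLr]
    calc Real.log r ≤ Real.log (Real.sqrt δ) := Real.log_le_log h0r hrsq.le
      _ = Real.log δ / 2 := Real.log_sqrt hδ0.le
  have hf5 : (ε/2)*Lr ≤ (ε/2)*(Real.log δ/2) :=
    mul_le_mul_of_nonneg_left hLrlog (by positivity)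
  have hf6 : (ε/4)*Real.log δ ≤ (ε/4)*T :=
    mul_le_mul_of_nonneg_left hlogδT (by positivity)
  have hf7 : (ε/4)*T = A - K := by
    rw [hT]
    field_simp
  linarith

/-- A subharmonic function of finite energy on the punctured unit disk satisfies the
maximum principle with respect to the exterior boundary circle alone. -/
theorem statement12 (w : ℂ → ℝ)
    (hC2 : ContDiffOn ℝ 2 w {z : ℂ | 0 < ‖z‖ ∧ ‖z‖ < 1})
    (hsub : ∀ z : ℂ, 0 < ‖z‖ → ‖z‖ < 1 → 0 ≤ lap w z)
    (hcont : ContinuousOn w {z : ℂ | 0 < ‖z‖ ∧ ‖z‖ ≤ 1})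
    (henergy : IntegrableOn (fun z => pdX w z ^ 2 + pdY w z ^ 2)
      {z : ℂ | 0 < ‖z‖ ∧ ‖z‖ < 1})
    (z : ℂ) (hz0 : 0 < ‖z‖) (hz1 : ‖z‖ < 1) :
    w z ≤ sSup (w '' Metric.sphere (0 : ℂ) 1) := by
  have hpi := Real.pi_pos
  set M := sSup (w '' Metric.sphere (0 : ℂ) 1) with hM
  have hC2' : ContDiffOn ℝ 2 w PD := hC2
  have henergy' : IntegrableOn (Fen w) PD := henergy
  have hsphere_sub : Metric.sphere (0:ℂ) 1 ⊆ {z : ℂ | 0 < ‖z‖ ∧ ‖z‖ ≤ 1} := by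
    intro ζ hζ
    rw [Metric.mem_sphere, Complex.dist_eq, sub_zero] at hζ
    exact ⟨by rw [hζ]; norm_num, by rw [hζ]⟩
  have hMb : ∀ ζ : ℂ, ‖ζ‖ = 1 → w ζ ≤ M := by
    intro ζ hζ
    have hmem : ζ ∈ Metric.sphere (0:ℂ) 1 := by
      rw [Metric.mem_sphere, Complex.dist_eq, sub_zero]; exact hζ
    apply le_csSup
    · exact ((isCompact_sphere 0 1).image_of_continuousOn
        (hcont.mono hsphere_sub)).bddAbove
    · exact Set.mem_image_of_mem w hmem
  have hmain : ∀ ε δp : ℝ, 0 < ε → 0 < δp →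
      w z + ε * lpsi z + δp * nsq z ≤ M + δp := by
    intro ε δp hε hδp
    obtain ⟨r, hr0, hrz, hrkey⟩ := key_small_circle hC2' henergy'
      (ε := 2*ε) (c := ‖z‖) (A := M) (by linarith) hz0
    have hr1 : r < 1 := lt_trans hrz hz1
    set v : ℂ → ℝ := fun ζ => w ζ + (ε * lpsi ζ + δp * nsq ζ) with hv
    have hUsub : {ζ : ℂ | r < ‖ζ‖ ∧ ‖ζ‖ < 1} ⊆ PD :=
      fun ζ hζ => ⟨lt_trans hr0 hζ.1, hζ.2⟩
    have hPD0 : ∀ ζ ∈ PD, ζ ≠ (0:ℂ) := fun ζ hζ => by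
      intro h
      rw [h] at hζ
      simp [PD] at hζ
    have hlpsiC : ∀ s : Set ℂ, (∀ ζ ∈ s, ζ ≠ (0:ℂ)) → ContinuousOn lpsi s := by
      intro s hs
      intro ζ hζ
      apply ContinuousAt.continuousWithinAt
      exact (Real.continuousAt_log (nsq_pos (hs ζ hζ)).ne').comp
        contDiff_nsq.continuous.continuousAt
    have hAnn0 : ∀ ζ ∈ {ζ : ℂ | r ≤ ‖ζ‖ ∧ ‖ζ‖ ≤ 1}, ζ ≠ (0:ℂ) := by
      intro ζ hζ h0
      rw [h0] at hζ
      simp at hζ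
      linarith [hζ]
    have hvcont : ContinuousOn v {ζ : ℂ | r ≤ ‖ζ‖ ∧ ‖ζ‖ ≤ 1} := by
      apply ContinuousOn.add
      · exact hcont.mono (fun ζ hζ => ⟨lt_of_lt_of_le hr0 hζ.1, hζ.2⟩)
      · exact (continuousOn_const.mul (hlpsiC _ hAnn0)).add
          (continuousOn_const.mul contDiff_nsq.continuous.continuousOn)
    have hvC2 : ContDiffOn ℝ 2 v {ζ : ℂ | r < ‖ζ‖ ∧ ‖ζ‖ < 1} := by
      apply ContDiffOn.add
      · exact hC2'.mono hUsub
      · exact ((contDiffOn_lpsi (fun ζ hζ => hPD0 ζ (hUsub hζ))).const_smul ε).add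
          (contDiff_nsq.contDiffOn.const_smul δp)
    have hvlap : ∀ ζ : ℂ, r < ‖ζ‖ → ‖ζ‖ < 1 → 0 < lap v ζ := by
      intro ζ h1 h2
      have hζPD : ζ ∈ PD := ⟨lt_trans hr0 h1, h2⟩
      rw [hv, lap_pert isOpen_PD hPD0 hζPD hC2' ε δp]
      have := hsub ζ (lt_trans hr0 h1) h2
      linarith
    have hvb : ∀ ζ : ℂ, (‖ζ‖ = r ∨ ‖ζ‖ = 1) → v ζ ≤ M + δp := by
      intro ζ hbd
      rcases hbd with hbr | hb1
      · have hkey := hrkey ζ hbr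
        have hnsq : nsq ζ = r^2 := by rw [nsq_eq_abs_sq, hbr]
        have hlpsi : lpsi ζ = 2 * Real.log r := by
          rw [lpsi, hnsq, show r^2 = r^2 from rfl, Real.log_pow]
          push_cast; ring
        rw [hv]
        simp only
        rw [hlpsi, hnsq]
        have hr2 : r^2 ≤ 1 := by nlinarith
        have hδpr : δp * r^2 ≤ δp := by nlinarith
        linarith [hkey]
      · have hnsq : nsq ζ = 1 := by rw [nsq_eq_abs_sq, hb1]; norm_num
        have hlpsi : lpsi ζ = 0 := by rw [lpsi, hnsq, Real.log_one]
        rw [hv]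
        simp only
        rw [hlpsi, hnsq]
        have := hMb ζ hb1
        linarith
    have := maxPrinciple hr0 hr1 hvcont hvC2 hvlap hvb z hrz.le hz1.le
    rw [hv] at this
    simp only at this
    linarith
  -- take limits
  by_contra hcon
  push_neg at hcon
  set d := w z - M with hd
  have hd0 : 0 < d := by linarith
  have hnsq0 : 0 ≤ nsq z := by rw [nsq_eq_abs_sq]; positivity
  have hnsq1 : nsq z ≤ 1 := by
    rw [nsq_eq_abs_sq]
    nlinarith
  set ε := d / (4 * (1 + |lpsi z|)) with hε
  have habs : 0 < 1 + |lpsi z| := by positivity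
  have hε0 : 0 < ε := by positivity
  set δp := d / 4 with hδp
  have hδp0 : 0 < δp := by positivity
  have h := hmain ε δp hε0 hδp0
  have h1 : -(ε * lpsi z) ≤ d/4 := by
    have h2 : -(lpsi z) ≤ |lpsi z| := neg_le_abs _
    have h3 : ε * (1 + |lpsi z|) = d/4 := by
      rw [hε]; field_simp
    have hh := mul_le_mul_of_nonneg_left h2 hε0.le
    nlinarith [hh, h3, hε0.le]
  have h4 : δp * nsq z ≥ 0 := by positivity
  have h5 : δp = d/4 := rfl
  linarith
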